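/- Let q be a stationary point of φ on the unit sphere (i.e., A ζ°³ = ‖ζ‖₄⁴ q with ζ = Aᵀq) satisfying ‖ζ‖₄⁶ ≥ C⋆ μ κ² ‖ζ‖₃³ with C⋆ ≥ 10 and κ ≥ 1, and suppose there is exactly one index l with |ζ_l| ≥ 2μ‖ζ‖₃³/‖ζ‖₄⁴. Then (i) |⟨q, a_l⟩|/‖a_l‖₂ ≥ 1 − 2c⋆κ^{−2}, and (ii) for every unit vector v with ⟨v, q⟩ = 0 one has vᵀ Hess φ(q) v ≥ (1 − 6c⋆ − 36c⋆² − 24c⋆³)‖ζ‖₄⁴ > 0, where c⋆ = 1/C⋆. -/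

import Mathlib

open Finset Matrix

set_option maxHeartbeats 1000000 in
private lemma singleSpike_scalar (u S M z a R : ℝ)
    (hS0 : 0 < S) (hS1 : S ≤ 1) (hu0 : 0 < u) (hu1 : u ≤ 1/10)
    (hM0 : 0 < M) (hMu : M ^ 2 ≤ u ^ 2 * S ^ 3)
    (hz2le1 : z ^ 2 ≤ 1) (hz0 : z ≠ 0)
    (hsum4 : S ^ 2 * (S - z ^ 4) ≤ 4 * M ^ 2 * (1 - z ^ 2))
    (hstatl : a * z ^ 3 + R = S * z) (hR : |R| ≤ M) :
    (1 - 2*u) ^ 2 * a ≤ z ^ 2 ∧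
      z ^ 2 * (a - z ^ 2) ≤ ((102/100) * u + 4 * u ^ 2) * S := by
  have hz2pos : 0 < z ^ 2 := by positivity
  have hz4 : 0 < z ^ 4 := by positivity
  have key1 : (1 - 4 * u ^ 2) * S ≤ z ^ 4 := by
    nlinarith [mul_pos hS0 hS0, sq_nonneg (M * z), sq_nonneg M]
  have hu2 : u ^ 2 ≤ 1/100 := by nlinarith [hu0, hu1]
  have hu2S : u ^ 2 * S ≤ (1/100) * S := by nlinarith [hu2, hS0]
  have hS2 : S ^ 2 ≤ S := by nlinarith [hS0, hS1]
  have key2 : (96/100) * S ^ 2 ≤ z ^ 4 := by nlinarith [key1, hu2S, hS2]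
  have key3 : (97/100) * S ≤ z ^ 2 := by
    nlinarith [key2, mul_pos hS0 hS0]
  have hSz : S * z ^ 2 ≤ (100/97) * z ^ 4 := by nlinarith [key3]
  have key4 : M * |z| ≤ (102/100) * u * S * z ^ 2 := by
    have h1 : M ^ 2 * z ^ 2 ≤ u ^ 2 * S ^ 3 * z ^ 2 :=
      mul_le_mul_of_nonneg_right hMu (sq_nonneg z)
    have h2 : u ^ 2 * S ^ 2 * (S * z ^ 2) ≤ u ^ 2 * S ^ 2 * ((100/97) * z ^ 4) :=
      mul_le_mul_of_nonneg_left hSz (by positivity)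
    have hsq : (M * |z|) ^ 2 ≤ ((102/100) * u * S * z ^ 2) ^ 2 := by
      have h3 : (M * |z|) ^ 2 = M ^ 2 * z ^ 2 := by rw [mul_pow, sq_abs]
      nlinarith [h1, h2]
    have hb : 0 < (102/100) * u * S * z ^ 2 := by positivity
    nlinarith [hsq, hb, mul_nonneg hM0.le (abs_nonneg z)]
  have hRz : a * z ^ 4 + R * z = S * z ^ 2 := by linear_combination z * hstatl
  have hRzabs : -(R * z) ≤ M * |z| := by
    calc -(R * z) ≤ |R * z| := neg_le_abs _
      _ = |R| * |z| := abs_mul _ _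
      _ ≤ M * |z| := mul_le_mul_of_nonneg_right hR (abs_nonneg z)
  have st1 : a * z ^ 4 ≤ (1 + (102/100) * u) * S * z ^ 2 := by
    nlinarith [hRz, hRzabs, key4]
  have st2 : (1 - 2*u) ^ 2 * (1 + (102/100) * u) ≤ 1 - 4 * u ^ 2 := by
    nlinarith [hu0, hu1]
  have c3 : (1 - 4 * u ^ 2) * (S * z ^ 2) ≤ z ^ 4 * z ^ 2 := by
    nlinarith [key1]
  constructor
  · have c1 : (1 - 2*u) ^ 2 * (a * z ^ 4) ≤ (1 - 2*u) ^ 2 * ((1 + (102/100) * u) * S * z ^ 2) :=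
      mul_le_mul_of_nonneg_left st1 (sq_nonneg _)
    have c2 : (1 - 2*u) ^ 2 * ((1 + (102/100) * u) * S * z ^ 2) ≤ (1 - 4 * u ^ 2) * (S * z ^ 2) := by
      nlinarith [st2, mul_nonneg hS0.le (sq_nonneg z)]
    nlinarith [c1, c2, c3, hz4]
  · have d1 : a * z ^ 4 - z ^ 2 * z ^ 4 ≤ ((102/100) * u + 4 * u ^ 2) * S * z ^ 2 := by
      nlinarith [st1, c3]
    nlinarith [d1, hz2pos]

private lemma singleSpike_Q (u S M Q x : ℝ) (hS0 : 0 < S)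
    (hMu : M ^ 2 ≤ u ^ 2 * S ^ 3)
    (hb1 : S ^ 2 * (Q - x) ≤ 4 * M ^ 2)
    (hbz : x ≤ ((102/100) * u + 4 * u ^ 2) * S) :
    Q ≤ ((102/100) * u + 8 * u ^ 2) * S := by
  nlinarith [mul_pos hS0 hS0, mul_le_mul_of_nonneg_left hbz (le_of_lt (mul_pos hS0 hS0))]

private lemma singleSpike_coef (u c : ℝ) (hu0 : 0 < u) (huc : u ≤ c) (hc1 : c ≤ 1/10) :
    (102/100) * u + 8 * u ^ 2 ≤ 2 * c + 12 * c ^ 2 + 8 * c ^ 3 := by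
  nlinarith [hu0, huc, hc1]

private lemma singleSpike_pos (c : ℝ) (hc0 : 0 < c) (hc1 : c ≤ 1/10) :
    0 < 1 - 6 * c - 36 * c ^ 2 - 24 * c ^ 3 := by
  nlinarith [hc0, hc1]

private lemma singleSpike_sqle (x y : ℝ) (hx : 0 ≤ x) (hy : 0 ≤ y) (h : x ^ 2 ≤ y ^ 2) :
    x ≤ y := by nlinarith


set_option maxHeartbeats 4000000 in
/-- **Single-spike stationary points are local minima.**
Let `A ∈ ℝ^{k×n}` have orthonormal rows and nonzero columns, with coherence `μ`,
`κ ≥ 1`, `C⋆ ≥ 10`, `c⋆ = 1/C⋆`.  Let `q` be a unit-norm stationary point of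
`φ(q) = −(1/4)‖Aᵀq‖₄⁴` on the sphere with `‖ζ‖₄⁶ ≥ C⋆ μ κ² ‖ζ‖₃³`, `ζ = Aᵀq`, and
suppose exactly one index `l` satisfies `|ζ_l| ≥ 2μ‖ζ‖₃³/‖ζ‖₄⁴`.  Then
(i) `|⟨q, a_l⟩| / ‖a_l‖₂ ≥ 1 − 2 c⋆ κ⁻²`, and
(ii) for every unit vector `v ⊥ q`, `vᵀ (Hess φ(q)) v ≥ (1 − 6c⋆ − 36c⋆² − 24c⋆³)‖ζ‖₄⁴ > 0`,
where `Hess φ(q) = −P (3 A diag(ζ°²) Aᵀ − ‖ζ‖₄⁴ I) P`, `P = I − q qᵀ`. -/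
theorem single_spike_stationary_is_local_min
    {k n : ℕ}
    (A : Matrix (Fin k) (Fin n) ℝ) (q : Fin k → ℝ) (μ κ Cstar : ℝ) (l : Fin n)
    (horth : A * Aᵀ = 1)
    (hcols : ∀ i : Fin n, (fun r => A r i) ≠ 0)
    (hμ : IsGreatest {x : ℝ | ∃ i j : Fin n, i ≠ j ∧
            x = |∑ r, A r i * A r j|} μ)
    (hκ : 1 ≤ κ) (hC : 10 ≤ Cstar)
    (hq_unit : ∑ r, (q r) ^ 2 = 1)
    (hstat : A.mulVec (fun i => ((Aᵀ.mulVec q) i) ^ 3)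
              = (∑ i, ((Aᵀ.mulVec q) i) ^ 4) • q)
    (hregion : (∑ i, ((Aᵀ.mulVec q) i) ^ 4) ^ ((3 : ℝ) / 2)
              ≥ Cstar * μ * κ ^ 2 * ∑ i, |(Aᵀ.mulVec q) i| ^ 3)
    (hl : |(Aᵀ.mulVec q) l|
            ≥ 2 * μ * (∑ i, |(Aᵀ.mulVec q) i| ^ 3) / (∑ i, ((Aᵀ.mulVec q) i) ^ 4))
    (huniq : ∀ j : Fin n,
        |(Aᵀ.mulVec q) j|
            ≥ 2 * μ * (∑ i, |(Aᵀ.mulVec q) i| ^ 3) / (∑ i, ((Aᵀ.mulVec q) i) ^ 4)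
        → j = l) :
    |∑ r, q r * A r l| / Real.sqrt (∑ r, (A r l) ^ 2) ≥ 1 - 2 * (1 / Cstar) * κ⁻¹ ^ 2
    ∧ ∀ v : Fin k → ℝ, (∑ r, (v r) ^ 2 = 1) → (∑ r, v r * q r = 0) →
        v ⬝ᵥ ((-((1 - Matrix.vecMulVec q q) *
                ((3 : ℝ) • (A * Matrix.diagonal (fun i => ((Aᵀ.mulVec q) i) ^ 2) * Aᵀ)
                  - (∑ i, ((Aᵀ.mulVec q) i) ^ 4) • (1 : Matrix (Fin k) (Fin k) ℝ)) *
                (1 - Matrix.vecMulVec q q))).mulVec v)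
          ≥ (1 - 6 * (1 / Cstar) - 36 * (1 / Cstar) ^ 2 - 24 * (1 / Cstar) ^ 3)
              * (∑ i, ((Aᵀ.mulVec q) i) ^ 4)
        ∧ 0 < (1 - 6 * (1 / Cstar) - 36 * (1 / Cstar) ^ 2 - 24 * (1 / Cstar) ^ 3)
              * (∑ i, ((Aᵀ.mulVec q) i) ^ 4) := by
  have hC0 : (0:ℝ) < Cstar := by linarith
  have hκ0 : (0:ℝ) < κ := by linarith
  set ζ : Fin n → ℝ := Aᵀ.mulVec q with hζdef
  set S : ℝ := ∑ i, ζ i ^ 4 with hSdef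
  set T : ℝ := ∑ i, |ζ i| ^ 3 with hTdef
  -- isometry on row space
  have hiso : ∀ x : Fin k → ℝ, ∑ i, ((Aᵀ.mulVec x) i)^2 = ∑ r, (x r)^2 := by
    intro x
    have h1 : (Aᵀ.mulVec x) ⬝ᵥ (Aᵀ.mulVec x) = x ⬝ᵥ x := by
      rw [Matrix.dotProduct_mulVec, Matrix.vecMul_transpose, Matrix.mulVec_mulVec, horth,
        Matrix.one_mulVec]
    simpa [dotProduct, sq] using h1
  have hζ2 : ∑ i, ζ i ^ 2 = 1 := by rw [hζdef, hiso]; exact hq_unit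
  have hζ2le : ∀ i, ζ i ^ 2 ≤ 1 := by
    intro i
    rw [← hζ2]
    exact Finset.single_le_sum (f := fun j => ζ j ^ 2) (fun j _ => sq_nonneg _) (mem_univ i)
  -- positivity of S, T
  have hζne : ∃ i, ζ i ≠ 0 := by
    by_contra h
    push_neg at h
    simp [h] at hζ2
  have hS0 : 0 < S := by
    obtain ⟨i, hi⟩ := hζne
    exact Finset.sum_pos' (fun j _ => by positivity)
      ⟨i, mem_univ i, by positivity⟩
  have hT0 : 0 < T := by
    obtain ⟨i, hi⟩ := hζne
    exact Finset.sum_pos' (fun j _ => by positivity)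
      ⟨i, mem_univ i, by positivity⟩
  have hS1 : S ≤ 1 := by
    rw [hSdef, ← hζ2]
    refine Finset.sum_le_sum fun i _ => ?_
    have h := hζ2le i
    calc ζ i ^ 4 = ζ i ^ 2 * ζ i ^ 2 := by ring
      _ ≤ ζ i ^ 2 * 1 := mul_le_mul_of_nonneg_left h (sq_nonneg _)
      _ = ζ i ^ 2 := mul_one _
  -- coherence bounds
  have hcoh : ∀ i j : Fin n, i ≠ j → |∑ r, A r i * A r j| ≤ μ :=
    fun i j h => hμ.2 ⟨i, j, h, rfl⟩
  have hμ0 : 0 ≤ μ := by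
    obtain ⟨i, j, hij, hx⟩ := hμ.1
    rw [hx]; positivity
  have hμpos : 0 < μ := by
    rcases hμ0.lt_or_eq with h | h
    · exact h
    · exfalso
      obtain ⟨i, j, hij, -⟩ := hμ.1
      have hzero : 2 * μ * T / S = 0 := by rw [← h]; ring
      have hi : i = l := huniq i (by rw [hzero]; positivity)
      have hj : j = l := huniq j (by rw [hzero]; positivity)
      exact hij (hi.trans hj.symm)
  set M : ℝ := μ * T with hMdef
  have hM0 : 0 < M := mul_pos hμpos hT0
  -- region: M² ≤ u² S³ with u = 1/(Cstar κ²)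
  set u : ℝ := 1 / (Cstar * κ ^ 2) with hudef
  have hu0 : 0 < u := by positivity
  have hκ2 : (1:ℝ) ≤ κ ^ 2 := one_le_pow₀ hκ
  have hCκ : 10 ≤ Cstar * κ ^ 2 := by
    have := mul_le_mul_of_nonneg_left hκ2 hC0.le
    linarith
  have hu1 : u ≤ 1/10 := by
    rw [hudef]
    rw [div_le_div_iff₀ (by linarith) (by norm_num)]
    linarith
  have huc : u ≤ 1 / Cstar := by
    have h2 := mul_le_mul_of_nonneg_left hκ2 hC0.le
    rw [hudef, div_le_div_iff₀ (by positivity) hC0]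
    linarith
  have hMu : M ^ 2 ≤ u ^ 2 * S ^ 3 := by
    have hline : Cstar * κ ^ 2 * M ≤ S ^ ((3:ℝ)/2) := by
      calc Cstar * κ ^ 2 * M = Cstar * μ * κ ^ 2 * T := by rw [hMdef]; ring
        _ ≤ S ^ ((3:ℝ)/2) := hregion
    have h3 : (S ^ ((3:ℝ)/2)) ^ 2 = S ^ 3 := by
      rw [← Real.rpow_natCast (S ^ ((3:ℝ)/2)) 2, ← Real.rpow_mul hS0.le]
      norm_num
    have hsq : (Cstar * κ ^ 2 * M) ^ 2 ≤ S ^ 3 := by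
      rw [← h3]
      exact pow_le_pow_left₀ (by positivity) hline 2
    have hid : u * (Cstar * κ ^ 2) = 1 := by rw [hudef]; field_simp
    have h4 := mul_le_mul_of_nonneg_left hsq (sq_nonneg u)
    have h5 : u ^ 2 * (Cstar * κ ^ 2 * M) ^ 2 = (u * (Cstar * κ ^ 2)) ^ 2 * M ^ 2 := by ring
    rw [h5, hid] at h4
    linarith
  -- stationarity at l via the Gram matrix
  set z : ℝ := ζ l with hzdef
  set a : ℝ := ∑ r, (A r l) ^ 2 with hadef
  have hstat_l : ∑ i, (∑ r, A r l * A r i) * ζ i ^ 3 = S * z := by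
    have h1 : (Aᵀ * A) *ᵥ (fun i => ζ i ^ 3) = S • ζ := by
      rw [← Matrix.mulVec_mulVec, hstat, Matrix.mulVec_smul]
    have h2 := congrFun h1 l
    simp only [Matrix.mulVec, dotProduct, Matrix.mul_apply, Matrix.transpose_apply,
      Pi.smul_apply, smul_eq_mul] at h2
    rw [hzdef]
    exact h2
  set R : ℝ := ∑ i ∈ univ.erase l, (∑ r, A r l * A r i) * ζ i ^ 3 with hRdef
  have hstatl : a * z ^ 3 + R = S * z := by
    have hsplit := Finset.sum_erase_add univ
      (fun i => (∑ r, A r l * A r i) * ζ i ^ 3) (mem_univ l)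
    simp only [← hRdef] at hsplit
    have hal : (∑ r, A r l * A r l) = a := by
      rw [hadef]
      exact Finset.sum_congr rfl fun r _ => by ring
    rw [← hstat_l, ← hsplit, hal, ← hzdef]
    ring
  have hR : |R| ≤ M := by
    calc |R| ≤ ∑ i ∈ univ.erase l, |(∑ r, A r l * A r i) * ζ i ^ 3| :=
          Finset.abs_sum_le_sum_abs _ _
      _ ≤ ∑ i ∈ univ.erase l, μ * |ζ i| ^ 3 := by
          refine Finset.sum_le_sum fun i hi => ?_
          rw [abs_mul, abs_pow]
          exact mul_le_mul_of_nonneg_right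
            (hcoh l i (Ne.symm (Finset.ne_of_mem_erase hi))) (by positivity)
      _ ≤ ∑ i, μ * |ζ i| ^ 3 := by
          refine Finset.sum_le_sum_of_subset_of_nonneg
            (Finset.erase_subset _ _) fun i _ _ => by positivity
      _ = M := by rw [hMdef, hTdef, Finset.mul_sum]
  have ha0 : 0 < a := by
    obtain ⟨r, hr⟩ := Function.ne_iff.mp (hcols l)
    have hr' : A r l ≠ 0 := by simpa using hr
    exact Finset.sum_pos' (fun j _ => sq_nonneg _)
      ⟨r, mem_univ r, by positivity⟩
  have ha1 : a ≤ 1 := by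
    have hx := hiso (fun r => A r l)
    have hdiag : (Aᵀ.mulVec (fun r => A r l)) l = a := by
      rw [hadef]
      simp only [Matrix.mulVec, dotProduct, Matrix.transpose_apply]
      exact Finset.sum_congr rfl fun r _ => by ring
    have hsq : ((Aᵀ.mulVec (fun r => A r l)) l) ^ 2 ≤ ∑ i, ((Aᵀ.mulVec (fun r => A r l)) i) ^ 2 :=
      Finset.single_le_sum (f := fun i => ((Aᵀ.mulVec (fun r => A r l)) i) ^ 2)
        (fun i _ => sq_nonneg _) (mem_univ l)
    rw [hdiag, hx] at hsq
    rw [← hadef] at hsq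
    rw [sq] at hsq
    exact (mul_le_iff_le_one_left ha0).1 hsq
  have hzcol : ∑ r, A r l * q r = z := by
    rw [hzdef, hζdef]
    simp only [Matrix.mulVec, dotProduct, Matrix.transpose_apply]
  have hza : z ^ 2 ≤ a := by
    have hcs := Finset.sum_mul_sq_le_sq_mul_sq univ (fun r => A r l) q
    rw [hzcol] at hcs
    rw [hadef]
    calc z ^ 2 ≤ (∑ r, (A r l) ^ 2) * ∑ r, (q r) ^ 2 := hcs
      _ = ∑ r, (A r l) ^ 2 := by rw [hq_unit, mul_one]
  have hz2le1 : z ^ 2 ≤ 1 := hζ2le l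
  have hlM : 2 * M ≤ S * |z| := by
    rw [ge_iff_le, div_le_iff₀ hS0] at hl
    rw [hMdef]
    calc 2 * (μ * T) = 2 * μ * T := by ring
      _ ≤ |ζ l| * S := hl
      _ = S * |z| := by rw [hzdef]; ring
  have hz0 : z ≠ 0 := by
    intro h
    rw [h] at hlM
    simp at hlM
    linarith [hM0]
  have hz2pos : 0 < z ^ 2 := by positivity
  have hz4 : 0 < z ^ 4 := by positivity
  -- off-spike entries are small
  have hsmall : ∀ j : Fin n, j ≠ l → S * |ζ j| ≤ 2 * M := by
    intro j hj
    by_contra h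
    push_neg at h
    refine hj (huniq j ?_)
    rw [ge_iff_le, div_le_iff₀ hS0]
    rw [hMdef] at h
    linarith
  have hsum_off : ∑ j ∈ univ.erase l, ζ j ^ 2 = 1 - z ^ 2 := by
    have h := Finset.sum_erase_add univ (fun j => ζ j ^ 2) (mem_univ l)
    rw [hζ2] at h
    rw [hzdef]
    linarith
  have hsum4 : S ^ 2 * (S - z ^ 4) ≤ 4 * M ^ 2 * (1 - z ^ 2) := by
    have hoff : ∑ j ∈ univ.erase l, ζ j ^ 4 = S - z ^ 4 := by
      have h := Finset.sum_erase_add univ (fun j => ζ j ^ 4) (mem_univ l)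
      rw [hSdef, hzdef]
      linarith
    have hterm : ∀ j ∈ univ.erase l, S ^ 2 * ζ j ^ 4 ≤ 4 * M ^ 2 * ζ j ^ 2 := by
      intro j hj
      have h1 := hsmall j (Finset.ne_of_mem_erase hj)
      have h2 : (S * |ζ j|) ^ 2 ≤ (2 * M) ^ 2 :=
        pow_le_pow_left₀ (by positivity) h1 2
      have h3 : (S * |ζ j|) ^ 2 = S ^ 2 * ζ j ^ 2 := by
        rw [mul_pow, sq_abs]
      rw [h3] at h2
      have h4 := mul_le_mul_of_nonneg_right h2 (sq_nonneg (ζ j))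
      calc S ^ 2 * ζ j ^ 4 = S ^ 2 * ζ j ^ 2 * ζ j ^ 2 := by ring
        _ ≤ (2 * M) ^ 2 * ζ j ^ 2 := h4
        _ = 4 * M ^ 2 * ζ j ^ 2 := by ring
    have hle := Finset.sum_le_sum hterm
    have e1 : ∑ j ∈ univ.erase l, S ^ 2 * ζ j ^ 4 = S ^ 2 * (S - z ^ 4) := by
      rw [← Finset.mul_sum, hoff]
    have e2 : ∑ j ∈ univ.erase l, 4 * M ^ 2 * ζ j ^ 2 = 4 * M ^ 2 * (1 - z ^ 2) := by
      rw [← Finset.mul_sum, hsum_off]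
    linarith [hle, e1.symm.le, e2]
  -- core scalar estimates (outsourced to auxiliary lemma)
  obtain ⟨key5, hbA⟩ := singleSpike_scalar u S M z a R hS0 hS1 hu0 hu1 hM0 hMu
    hz2le1 hz0 hsum4 hstatl hR
  have h2u : (0:ℝ) ≤ 1 - 2 * u := by linarith [hu1]
  constructor
  · -- part (i)
    have hqa : ∑ r, q r * A r l = z := by
      rw [← hzcol]
      exact Finset.sum_congr rfl fun r _ => mul_comm _ _
    rw [hqa]
    have hgoal1 : 1 - 2 * (1 / Cstar) * κ⁻¹ ^ 2 = 1 - 2 * u := by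
      rw [hudef]
      field_simp
    rw [hgoal1, ge_iff_le, le_div_iff₀ (Real.sqrt_pos.2 ha0)]
    have hsq : ((1 - 2*u) * Real.sqrt a) ^ 2 ≤ |z| ^ 2 := by
      rw [mul_pow, Real.sq_sqrt ha0.le, sq_abs]
      exact key5
    exact singleSpike_sqle _ _ (mul_nonneg h2u (Real.sqrt_nonneg a)) (abs_nonneg z) hsq
  · -- part (ii)
    intro v hv1 hvq
    have hqv : ∑ s, q s * v s = 0 := by
      rw [← hvq]
      exact Finset.sum_congr rfl fun s _ => mul_comm _ _
    set w : Fin n → ℝ := Aᵀ.mulVec v with hwdef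
    have hw2 : ∑ i, w i ^ 2 = 1 := by rw [hwdef, hiso]; exact hv1
    set Q : ℝ := ∑ i, ζ i ^ 2 * w i ^ 2 with hQdef
    have hQeq : v ⬝ᵥ ((-((1 - Matrix.vecMulVec q q) *
            ((3 : ℝ) • (A * Matrix.diagonal (fun i => ζ i ^ 2) * Aᵀ)
              - S • (1 : Matrix (Fin k) (Fin k) ℝ)) *
            (1 - Matrix.vecMulVec q q))).mulVec v) = S - 3 * Q := by
      have hPv : (1 - Matrix.vecMulVec q q).mulVec v = v := by
        funext r
        simp only [Matrix.sub_mulVec, Matrix.one_mulVec, Pi.sub_apply]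
        have : (Matrix.vecMulVec q q).mulVec v r = q r * ∑ s, q s * v s := by
          simp [Matrix.mulVec, dotProduct, Matrix.vecMulVec_apply, mul_assoc,
            Finset.mul_sum]
        rw [this, hqv]; ring
      have hvP : (1 - Matrix.vecMulVec q q).vecMul v = v := by
        funext s
        simp only [Matrix.vecMul_sub, Matrix.vecMul_one, Pi.sub_apply]
        have : (Matrix.vecMulVec q q).vecMul v s = (∑ r, v r * q r) * q s := by
          simp [Matrix.vecMul, dotProduct, Matrix.vecMulVec_apply, ← mul_assoc,
            Finset.sum_mul]
        rw [this, hvq]; ring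
      rw [Matrix.neg_mulVec, dotProduct_neg]
      rw [Matrix.mul_assoc, ← Matrix.mulVec_mulVec, ← Matrix.mulVec_mulVec, hPv,
        Matrix.dotProduct_mulVec, hvP]
      rw [Matrix.sub_mulVec, dotProduct_sub, Matrix.smul_mulVec,
        Matrix.smul_mulVec, Matrix.one_mulVec, dotProduct_smul,
        dotProduct_smul]
      have hvv : v ⬝ᵥ v = 1 := by simpa [dotProduct, sq] using hv1
      rw [hvv]
      have hADA : v ⬝ᵥ (A * Matrix.diagonal (fun i => ζ i ^ 2) * Aᵀ).mulVec v = Q := by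
        rw [Matrix.mul_assoc, ← Matrix.mulVec_mulVec, Matrix.dotProduct_mulVec,
          ← Matrix.mulVec_transpose, ← Matrix.mulVec_mulVec]
        rw [hQdef, hwdef]
        simp only [Matrix.mulVec_diagonal, dotProduct]
        exact Finset.sum_congr rfl fun i _ => by ring
      rw [hADA]
      simp only [smul_eq_mul]
      ring
    rw [hQeq]
    -- bound on w l
    have hwl2 : w l ^ 2 ≤ a - z ^ 2 := by
      have hwl : ∑ r, (A r l - z * q r) * v r = w l := by
        have : ∀ r, (A r l - z * q r) * v r = A r l * v r - z * (q r * v r) := fun r => by ring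
        rw [Finset.sum_congr rfl fun r _ => this r, Finset.sum_sub_distrib,
          ← Finset.mul_sum, hqv, mul_zero, sub_zero, hwdef]
        simp only [Matrix.mulVec, dotProduct, Matrix.transpose_apply]
      have hcs := Finset.sum_mul_sq_le_sq_mul_sq univ (fun r => A r l - z * q r) v
      rw [hwl, hv1, mul_one] at hcs
      have hnorm : ∑ r, (A r l - z * q r) ^ 2 = a - z ^ 2 := by
        calc ∑ r, (A r l - z * q r) ^ 2
            = ∑ r, ((A r l) ^ 2 - 2 * z * (A r l * q r) + z ^ 2 * (q r) ^ 2) :=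
              Finset.sum_congr rfl fun r _ => by ring
          _ = (∑ r, (A r l) ^ 2) - 2 * z * (∑ r, A r l * q r) + z ^ 2 * (∑ r, (q r) ^ 2) := by
              rw [Finset.sum_add_distrib, Finset.sum_sub_distrib, ← Finset.mul_sum,
                ← Finset.mul_sum]
          _ = a - 2 * z * z + z ^ 2 * 1 := by rw [hzcol, hq_unit, hadef]
          _ = a - z ^ 2 := by ring
      rw [hnorm] at hcs
      exact hcs
    -- off-spike part of Q
    have hb1 : S ^ 2 * (Q - z ^ 2 * w l ^ 2) ≤ 4 * M ^ 2 := by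
      have hsplit := Finset.sum_erase_add univ (fun i => ζ i ^ 2 * w i ^ 2) (mem_univ l)
      have hoff : Q - z ^ 2 * w l ^ 2 = ∑ j ∈ univ.erase l, ζ j ^ 2 * w j ^ 2 := by
        rw [hQdef, hzdef, ← hsplit]
        ring
      have hterm : ∀ j ∈ univ.erase l, S ^ 2 * (ζ j ^ 2 * w j ^ 2) ≤ 4 * M ^ 2 * w j ^ 2 := by
        intro j hj
        have h1 := hsmall j (Finset.ne_of_mem_erase hj)
        have h2 : (S * |ζ j|) ^ 2 ≤ (2 * M) ^ 2 :=
          pow_le_pow_left₀ (by positivity) h1 2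
        have h3 : (S * |ζ j|) ^ 2 = S ^ 2 * ζ j ^ 2 := by rw [mul_pow, sq_abs]
        rw [h3] at h2
        have h4 := mul_le_mul_of_nonneg_right h2 (sq_nonneg (w j))
        calc S ^ 2 * (ζ j ^ 2 * w j ^ 2) = S ^ 2 * ζ j ^ 2 * w j ^ 2 := by ring
          _ ≤ (2 * M) ^ 2 * w j ^ 2 := h4
          _ = 4 * M ^ 2 * w j ^ 2 := by ring
      have hwsum : ∑ j ∈ univ.erase l, w j ^ 2 ≤ 1 := by
        rw [← hw2]
        exact Finset.sum_le_sum_of_subset_of_nonneg (Finset.erase_subset _ _)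
          fun j _ _ => sq_nonneg _
      calc S ^ 2 * (Q - z ^ 2 * w l ^ 2)
          = ∑ j ∈ univ.erase l, S ^ 2 * (ζ j ^ 2 * w j ^ 2) := by rw [hoff, Finset.mul_sum]
        _ ≤ ∑ j ∈ univ.erase l, 4 * M ^ 2 * w j ^ 2 := Finset.sum_le_sum hterm
        _ = 4 * M ^ 2 * ∑ j ∈ univ.erase l, w j ^ 2 := by rw [← Finset.mul_sum]
        _ ≤ 4 * M ^ 2 := by
            have := mul_le_mul_of_nonneg_left hwsum (by positivity : (0:ℝ) ≤ 4 * M ^ 2)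
            linarith
    -- spike part
    have hbz : z ^ 2 * w l ^ 2 ≤ ((102/100) * u + 4 * u ^ 2) * S :=
      le_trans (mul_le_mul_of_nonneg_left hwl2 (sq_nonneg z)) hbA
    have hbQ : Q ≤ ((102/100) * u + 8 * u ^ 2) * S :=
      singleSpike_Q u S M Q (z ^ 2 * w l ^ 2) hS0 hMu hb1 hbz
    have hc0 : (0:ℝ) < 1 / Cstar := by positivity
    have hc1 : (1:ℝ) / Cstar ≤ 1 / 10 := by
      rw [div_le_div_iff₀ hC0 (by norm_num)]
      linarith
    have hQfin : Q ≤ (2 * (1 / Cstar) + 12 * (1 / Cstar) ^ 2 + 8 * (1 / Cstar) ^ 3) * S := by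
      have hco := singleSpike_coef u (1 / Cstar) hu0 huc hc1
      have := mul_le_mul_of_nonneg_right hco hS0.le
      linarith
    constructor
    · have hring : (1 - 6 * (1 / Cstar) - 36 * (1 / Cstar) ^ 2 - 24 * (1 / Cstar) ^ 3) * S
          = S - 3 * ((2 * (1 / Cstar) + 12 * (1 / Cstar) ^ 2 + 8 * (1 / Cstar) ^ 3) * S) := by
        ring
      rw [ge_iff_le, hring]
      linarith [hQfin]
    · exact mul_pos (singleSpike_pos (1 / Cstar) hc0 hc1) hS0
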